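/- For any q with q ≠ 0, q ≠ 1, q^2 ≠ 1, q^3 ≠ 1 and any positive integer n, ∑_{k=1}^{n} [k]_{q^2} [k]_q^4 q^{3(n−k)} = [(1−q^n)^2 (1−q^{n+1})^2 / ((1−q)^2 (1−q^2)(1−q^3))] · [ (1−q^n)(1−q^{n+1})/(1−q)^2 − q^n (1−q)/(1−q^2) ] (Schlosser's q-analogue of the sum of fifth powers, case m = 5). -/
import Mathlib
set_option maxHeartbeats 2000000


theorem schlosser_q_sum_m5 (q : ℝ) (hq0 : q ≠ 0) (hq : q ≠ 1) (hq2 : q ^ 2 ≠ 1)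
    (hq3 : q ^ 3 ≠ 1) (n : ℕ) (hn : 0 < n) :
    ∑ k ∈ Finset.Icc 1 n,
        ((q ^ (2 * k) - 1) / (q ^ 2 - 1)) * ((q ^ k - 1) / (q - 1)) ^ 4 *
          q ^ (3 * (n - k)) =
      ((1 - q ^ n) ^ 2 * (1 - q ^ (n + 1)) ^ 2 /
          ((1 - q) ^ 2 * (1 - q ^ 2) * (1 - q ^ 3))) *
        ((1 - q ^ n) * (1 - q ^ (n + 1)) / (1 - q) ^ 2 -
          q ^ n * (1 - q) / (1 - q ^ 2)) := by
  have h1 : (1 : ℝ) - q ≠ 0 := fun h => hq (by linarith)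
  have h2 : (1 : ℝ) - q ^ 2 ≠ 0 := fun h => hq2 (by linarith)
  have h3 : (1 : ℝ) - q ^ 3 ≠ 0 := fun h => hq3 (by linarith)
  have h1' : q - 1 ≠ 0 := fun h => hq (by linarith)
  have h2' : q ^ 2 - 1 ≠ 0 := fun h => hq2 (by linarith)
  have h3' : q ^ 3 - 1 ≠ 0 := fun h => hq3 (by linarith)
  induction n with
  | zero => exact absurd hn (by norm_num)
  | succ m ih =>
    rcases Nat.eq_zero_or_pos m with hm | hm
    · subst hm
      simp only [Finset.Icc_self, Finset.sum_singleton]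
      norm_num
      field_simp
      ring
    · have hstep : ∀ k ∈ Finset.Icc 1 m,
          ((q ^ (2 * k) - 1) / (q ^ 2 - 1)) * ((q ^ k - 1) / (q - 1)) ^ 4 *
            q ^ (3 * (m + 1 - k)) =
          q ^ 3 * (((q ^ (2 * k) - 1) / (q ^ 2 - 1)) * ((q ^ k - 1) / (q - 1)) ^ 4 *
            q ^ (3 * (m - k))) := by
        intro k hk
        simp only [Finset.mem_Icc] at hk
        have : m + 1 - k = (m - k) + 1 := by omega
        rw [this, Nat.mul_succ, pow_add]
        ring
      rw [Finset.sum_Icc_succ_top (by omega : 1 ≤ m + 1),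
        Finset.sum_congr rfl hstep, ← Finset.mul_sum, ih hm]
      have e1 : q ^ (2 * (m + 1)) = (q ^ m) ^ 2 * q ^ 2 := by
        rw [show 2 * (m + 1) = m * 2 + 2 by ring, pow_add, pow_mul]
      have e2 : q ^ (m + 1) = q ^ m * q := pow_succ q m
      have e3 : q ^ (m + 1 + 1) = q ^ m * q * q := by rw [pow_succ, pow_succ]
      rw [Nat.sub_self, e1, e3, e2]
      generalize q ^ m = t
      field_simp
      ring
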